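/- Let \(r(t_1,t_2;\lambda)\) be a tensor satisfying the non-skew-symmetric spectral dynamical classical Yang-Baxter equation \([r^{(12)},r^{(13)}] + [r^{(12)},r^{(23)}] + [r^{(32)},r^{(13)}] = \sum_\alpha (\omega_\alpha^{(3)}\partial_\alpha r^{(12)} - \omega_\alpha^{(2)}\partial_\alpha r^{(13)})\), with components of \(r\) lying in \(\mathfrak{g} \otimes \mathfrak{g}^*\) so that \([r^{(13)}, r^{(23)}]\)-type brackets between two \(\mathfrak{g}^*\)-legs vanish. Then the skew-symmetrization \(\rho(t_1,t_2;\lambda) := r(t_1,t_2;\lambda) - r^{(21)}(t_2,t_1;\lambda)\) satisfies the skew-symmetric spectral dynamical classical Yang-Baxter equation \([\rho^{(12)},\rho^{(13)}] + [\rho^{(12)},\rho^{(23)}] + [\rho^{(32)},\rho^{(13)}] = \sum_\alpha (\omega_\alpha^{(1)}\partial_\alpha \rho^{(23)} - \omega_\alpha^{(2)}\partial_\alpha \rho^{(13)} + \omega_\alpha^{(3)}\partial_\alpha \rho^{(12)})\). -/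

import Mathlib

/-!
STATEMENT 3: If `r(t₁,t₂;λ)` satisfies the non-skew-symmetric spectral dynamical classical
Yang–Baxter equation, with components lying in `𝔤 ⊗ 𝔤*` (so that brackets between two
`𝔤*`-legs vanish), then its skew-symmetrization `ρ(t₁,t₂;λ) = r(t₁,t₂;λ) - r²¹(t₂,t₁;λ)`
satisfies the skew-symmetric spectral dynamical classical Yang–Baxter equation.

Set-up: `L` is the Lie algebra `𝔡 = 𝔤 ⋉ 𝔤*` with `gs ⊆ L` the abelian subspace `𝔤*`; `S`
is the commutative ring of dynamical functions of `λ`, with commuting derivations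
`Dv α = ∂/∂λ_α`; `K` is the set of spectral parameters.  All tensors live in
`T = S ⊗ U(L) ⊗ U(L) ⊗ U(L)` and are given by finite sums of pure tensors:
`r(t₁,t₂;λ) = ∑ᵢ c i t₁ t₂ ⊗ (a i) ⊗ (b i)` with `b i ∈ gs`, and
`ω_α(t;λ) = ∑ⱼ o α j t ⊗ (w α j)` with `w α j ∈ gs`.
-/

noncomputable section

set_option synthInstance.maxHeartbeats 1000000
set_option maxHeartbeats 1000000

open scoped TensorProduct

variable {S : Type} [CommRing S] [Algebra ℂ S]
variable {L : Type} [LieRing L] [LieAlgebra ℂ L]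
variable {K : Type}

local notation "UL" => UniversalEnvelopingAlgebra ℂ L
local notation "T" => S ⊗[ℂ] ((UL ⊗[ℂ] UL) ⊗[ℂ] UL)

/-- a pure tensor `s ⊗ u ⊗ v ⊗ w` of `T`. -/
def el (s : S) (u v w : UL) : T := s ⊗ₜ[ℂ] ((u ⊗ₜ[ℂ] v) ⊗ₜ[ℂ] w)

/-- the embedding `L → U(L)`. -/
def iL (x : L) : UL := UniversalEnvelopingAlgebra.ι ℂ x

variable {κ μ : Type} [Fintype κ] [Fintype μ] {N : ℕ}

section placements

variable (c : κ → K → K → S) (a b : κ → L)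

/-- `r⁽¹²⁾(s,u)`. -/
def r12 (s u : K) : T := ∑ i : κ, el (c i s u) (iL (a i)) (iL (b i)) 1
/-- `r⁽¹³⁾(s,u)`. -/
def r13 (s u : K) : T := ∑ i : κ, el (c i s u) (iL (a i)) 1 (iL (b i))
/-- `r⁽²³⁾(s,u)`. -/
def r23 (s u : K) : T := ∑ i : κ, el (c i s u) 1 (iL (a i)) (iL (b i))
/-- `r⁽²¹⁾(s,u)`. -/
def r21 (s u : K) : T := ∑ i : κ, el (c i s u) (iL (b i)) (iL (a i)) 1
/-- `r⁽³¹⁾(s,u)`. -/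
def r31 (s u : K) : T := ∑ i : κ, el (c i s u) (iL (b i)) 1 (iL (a i))
/-- `r⁽³²⁾(s,u)`. -/
def r32 (s u : K) : T := ∑ i : κ, el (c i s u) 1 (iL (b i)) (iL (a i))

variable (Dv : Fin N → Module.End ℂ S)

/-- `∂_α r⁽¹²⁾(s,u)`. -/
def rd12 (α : Fin N) (s u : K) : T :=
  ∑ i : κ, el (Dv α (c i s u)) (iL (a i)) (iL (b i)) 1
/-- `∂_α r⁽¹³⁾(s,u)`. -/
def rd13 (α : Fin N) (s u : K) : T :=
  ∑ i : κ, el (Dv α (c i s u)) (iL (a i)) 1 (iL (b i))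

/-- the skew-symmetrization `ρ⁽¹²⁾(s,u) = r⁽¹²⁾(s,u) - r⁽²¹⁾(u,s)` and its placements. -/
def p12 (s u : K) : T := r12 c a b s u - r21 c a b u s
def p13 (s u : K) : T := r13 c a b s u - r31 c a b u s
def p23 (s u : K) : T := r23 c a b s u - r32 c a b u s
def p32 (s u : K) : T := r32 c a b s u - r23 c a b u s

/-- `∂_α ρ⁽¹²⁾(s,u)` etc. -/
def pd12 (α : Fin N) (s u : K) : T :=
  ∑ i : κ, (el (Dv α (c i s u)) (iL (a i)) (iL (b i)) 1
    - el (Dv α (c i u s)) (iL (b i)) (iL (a i)) 1)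
def pd13 (α : Fin N) (s u : K) : T :=
  ∑ i : κ, (el (Dv α (c i s u)) (iL (a i)) 1 (iL (b i))
    - el (Dv α (c i u s)) (iL (b i)) 1 (iL (a i)))
def pd23 (α : Fin N) (s u : K) : T :=
  ∑ i : κ, (el (Dv α (c i s u)) 1 (iL (a i)) (iL (b i))
    - el (Dv α (c i u s)) 1 (iL (b i)) (iL (a i)))

end placements

section omegas

variable (o : Fin N → μ → K → S) (w : Fin N → μ → L)

/-- `ω_α(t;λ)` placed in leg 1, 2 or 3. -/
def om1 (α : Fin N) (s : K) : T := ∑ j : μ, el (o α j s) (iL (w α j)) 1 1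
def om2 (α : Fin N) (s : K) : T := ∑ j : μ, el (o α j s) 1 (iL (w α j)) 1
def om3 (α : Fin N) (s : K) : T := ∑ j : μ, el (o α j s) 1 1 (iL (w α j))

end omegas


section Aux

/-! Auxiliary permutation machinery and lemmas. -/

/-- derivative placements not provided in the original file. -/
def rd21 (c : κ → K → K → S) (a b : κ → L) (Dv : Fin N → Module.End ℂ S)
    (α : Fin N) (s u : K) : T :=
  ∑ i : κ, el (Dv α (c i s u)) (iL (b i)) (iL (a i)) 1
def rd23 (c : κ → K → K → S) (a b : κ → L) (Dv : Fin N → Module.End ℂ S)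
    (α : Fin N) (s u : K) : T :=
  ∑ i : κ, el (Dv α (c i s u)) 1 (iL (a i)) (iL (b i))
def rd31 (c : κ → K → K → S) (a b : κ → L) (Dv : Fin N → Module.End ℂ S)
    (α : Fin N) (s u : K) : T :=
  ∑ i : κ, el (Dv α (c i s u)) (iL (b i)) 1 (iL (a i))
def rd32 (c : κ → K → K → S) (a b : κ → L) (Dv : Fin N → Module.End ℂ S)
    (α : Fin N) (s u : K) : T :=
  ∑ i : κ, el (Dv α (c i s u)) 1 (iL (b i)) (iL (a i))

/-- the linear map swapping legs 1 and 2. -/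
def sw12 : T →ₗ[ℂ] T :=
  TensorProduct.map LinearMap.id
    (TensorProduct.map (TensorProduct.comm ℂ UL UL).toLinearMap LinearMap.id)

/-- the linear map swapping legs 2 and 3. -/
def sw23 : T →ₗ[ℂ] T :=
  TensorProduct.map LinearMap.id
    ((TensorProduct.assoc ℂ UL UL UL).symm.toLinearMap ∘ₗ
      (TensorProduct.map LinearMap.id (TensorProduct.comm ℂ UL UL).toLinearMap) ∘ₗ
      (TensorProduct.assoc ℂ UL UL UL).toLinearMap)

/-- the linear map swapping legs 1 and 3. -/
def sw13 : T →ₗ[ℂ] T := sw12 ∘ₗ sw23 ∘ₗ sw12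

lemma sw12_el (s : S) (u v w : UL) :
    (sw12 (S := S) (L := L)) (el s u v w) = el s v u w := rfl

lemma sw23_el (s : S) (u v w : UL) :
    (sw23 (S := S) (L := L)) (el s u v w) = el s u w v := rfl

lemma sw13_el (s : S) (u v w : UL) :
    (sw13 (S := S) (L := L)) (el s u v w) = el s w v u := rfl

lemma el_mul (s s' : S) (u v w u' v' w' : UL) :
    el s u v w * el s' u' v' w' = el (s * s') (u * u') (v * v') (w * w') := by
  simp only [el, Algebra.TensorProduct.tmul_mul_tmul]

lemma lie_def' (x y : T) : ⁅x, y⁆ = x * y - y * x := Ring.lie_def x y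

lemma sum_mul' {ι : Type} [Fintype ι] (f : ι → T) (x : T) :
    (∑ i, f i) * x = ∑ i, f i * x := Finset.sum_mul Finset.univ f x

lemma mul_sum' {ι : Type} [Fintype ι] (f : ι → T) (x : T) :
    x * (∑ i, f i) = ∑ i, x * f i := Finset.mul_sum Finset.univ f x

lemma mul_sub' (x y z : T) : x * (y - z) = x * y - x * z := mul_sub x y z

lemma sub_mul' (x y z : T) : (x - y) * z = x * z - y * z := sub_mul x y z

lemma add_zero' (x : T) : x + 0 = x := add_zero x

lemma sub_zero' (x : T) : x - 0 = x := sub_zero x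

lemma sum_sub' {ι : Type} [Fintype ι] (f g : ι → T) :
    (∑ i, (f i - g i)) = (∑ i, f i) - ∑ i, g i := by
  classical
  have H : ∀ s : Finset ι, (∑ i ∈ s, (f i - g i)) = (∑ i ∈ s, f i) - ∑ i ∈ s, g i := by
    intro s
    induction s using Finset.induction_on with
    | empty => rw [Finset.sum_empty, Finset.sum_empty, Finset.sum_empty, sub_zero' 0]
    | insert _ _ hx ih =>
        rw [Finset.sum_insert hx, Finset.sum_insert hx, Finset.sum_insert hx, ih]
        abel
  exact H _

lemma iL_comm {x y : L} (h : ⁅x, y⁆ = 0) : iL x * iL y = iL y * iL x := by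
  letI : LieRing UL := LieRing.ofAssociativeRing
  have H := (UniversalEnvelopingAlgebra.ι ℂ (L := L)).map_lie (x := x) (y := y)
  rw [h, map_zero, Ring.lie_def] at H
  exact sub_eq_zero.mp H.symm

lemma lie_sum_sum_eq_zero {ι₁ ι₂ : Type} [Fintype ι₁] [Fintype ι₂]
    (f : ι₁ → T) (g : ι₂ → T) (h : ∀ i j, f i * g j = g j * f i) :
    ⁅∑ i : ι₁, f i, ∑ j : ι₂, g j⁆ = 0 := by
  rw [lie_def', sub_eq_zero]
  simp only [sum_mul', mul_sum']
  refine (Finset.sum_comm (s := (Finset.univ : Finset ι₂)) (t := (Finset.univ : Finset ι₁))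
    (f := fun j i => f i * g j)).trans ?_
  exact Finset.sum_congr rfl fun i _ => Finset.sum_congr rfl fun j _ => h i j

end Aux

/-- Skew-symmetrization of solutions of the non-skew-symmetric spectral dynamical
classical Yang–Baxter equation. -/
theorem skew_symmetrization_of_dynamical_CYBE
    (c : κ → K → K → S) (a b : κ → L)
    (o : Fin N → μ → K → S) (w : Fin N → μ → L)
    (Dv : Fin N → Module.End ℂ S)
    -- the `Dv α` are commuting derivations of `S`:
    (hder : ∀ α (x y : S), Dv α (x * y) = Dv α x * y + x * Dv α y)
    (hcomm : ∀ α β (x : S), Dv α (Dv β x) = Dv β (Dv α x))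
    -- the `𝔤*`-legs: `gs` is an abelian subspace containing all `b i` and `w α j`:
    (gs : Submodule ℂ L)
    (habelian : ∀ x ∈ gs, ∀ y ∈ gs, ⁅x, y⁆ = (0 : L))
    (hb : ∀ i, b i ∈ gs) (hw : ∀ α j, w α j ∈ gs)
    -- the non-skew-symmetric spectral dynamical classical Yang-Baxter equation:
    (hdCYBE : ∀ t₁ t₂ t₃ : K,
      ⁅r12 c a b t₁ t₂, r13 c a b t₁ t₃⁆ + ⁅r12 c a b t₁ t₂, r23 c a b t₂ t₃⁆
        + ⁅r32 c a b t₃ t₂, r13 c a b t₁ t₃⁆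
      = ∑ α : Fin N, (om3 o w α t₃ * rd12 c a b Dv α t₁ t₂
          - om2 o w α t₂ * rd13 c a b Dv α t₁ t₃)) :
    -- the skew-symmetric spectral dynamical classical Yang-Baxter equation for `ρ`:
    ∀ t₁ t₂ t₃ : K,
      ⁅p12 c a b t₁ t₂, p13 c a b t₁ t₃⁆ + ⁅p12 c a b t₁ t₂, p23 c a b t₂ t₃⁆
        + ⁅p32 c a b t₃ t₂, p13 c a b t₁ t₃⁆
      = ∑ α : Fin N, (om1 o w α t₁ * pd23 c a b Dv α t₂ t₃
          - om2 o w α t₂ * pd13 c a b Dv α t₁ t₃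
          + om3 o w α t₃ * pd12 c a b Dv α t₁ t₂) := by
  intro t₁ t₂ t₃
  -- notation shortcuts are avoided; we work with the definitions directly
  have h1 := hdCYBE t₁ t₂ t₃
  -- commutation of g*-legs
  have hcommL : ∀ i j : κ, iL (b i) * iL (b j) = iL (b j) * iL (b i) := fun i j =>
    iL_comm (habelian _ (hb i) _ (hb j))
  -- the three vanishing brackets
  have z4 : ⁅r21 c a b t₂ t₁, r31 c a b t₃ t₁⁆ = 0 := by
    rw [r21, r31]
    refine lie_sum_sum_eq_zero _ _ fun i j => ?_
    rw [el_mul, el_mul, hcommL j i, mul_comm (c j t₃ t₁) (c i t₂ t₁), one_mul, mul_one,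
      one_mul, mul_one]
  have z6 : ⁅r12 c a b t₁ t₂, r32 c a b t₃ t₂⁆ = 0 := by
    rw [r12, r32]
    refine lie_sum_sum_eq_zero _ _ fun i j => ?_
    rw [el_mul, el_mul, hcommL j i, mul_comm (c j t₃ t₂) (c i t₁ t₂), one_mul, mul_one,
      one_mul, mul_one]
  have z11 : ⁅r23 c a b t₂ t₃, r13 c a b t₁ t₃⁆ = 0 := by
    rw [r23, r13]
    refine lie_sum_sum_eq_zero _ _ fun i j => ?_
    rw [el_mul, el_mul, hcommL j i, mul_comm (c j t₁ t₃) (c i t₂ t₃), one_mul, mul_one,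
      one_mul, mul_one]
  -- the leg-(12)-swapped CYBE
  have h2 : ⁅r21 c a b t₂ t₁, r23 c a b t₂ t₃⁆ + ⁅r21 c a b t₂ t₁, r13 c a b t₁ t₃⁆
      + ⁅r31 c a b t₃ t₁, r23 c a b t₂ t₃⁆
      = ∑ α : Fin N, (om3 o w α t₃ * rd21 c a b Dv α t₂ t₁
          - om1 o w α t₁ * rd23 c a b Dv α t₂ t₃) := by
    have H : (sw12 (S := S) (L := L))
        (⁅r12 c a b t₂ t₁, r13 c a b t₂ t₃⁆ + ⁅r12 c a b t₂ t₁, r23 c a b t₁ t₃⁆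
          + ⁅r32 c a b t₃ t₁, r13 c a b t₂ t₃⁆)
        = (sw12 (S := S) (L := L))
        (∑ α : Fin N, (om3 o w α t₃ * rd12 c a b Dv α t₂ t₁
            - om2 o w α t₁ * rd13 c a b Dv α t₂ t₃)) := by
      rw [hdCYBE t₂ t₁ t₃]
    simp only [r12, r13, r23, r32, r21, r31, om1, om2, om3, rd12, rd13, rd21, rd23,
      lie_def', sum_mul', mul_sum', el_mul, one_mul, mul_one, map_add, map_sub,
      map_sum, sw12_el] at H ⊢
    exact H
  -- the leg-(13)-swapped CYBE
  have h3 : ⁅r32 c a b t₃ t₂, r31 c a b t₃ t₁⁆ + ⁅r32 c a b t₃ t₂, r21 c a b t₂ t₁⁆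
      + ⁅r12 c a b t₁ t₂, r31 c a b t₃ t₁⁆
      = ∑ α : Fin N, (om1 o w α t₁ * rd32 c a b Dv α t₃ t₂
          - om2 o w α t₂ * rd31 c a b Dv α t₃ t₁) := by
    have H : (sw13 (S := S) (L := L))
        (⁅r12 c a b t₃ t₂, r13 c a b t₃ t₁⁆ + ⁅r12 c a b t₃ t₂, r23 c a b t₂ t₁⁆
          + ⁅r32 c a b t₁ t₂, r13 c a b t₃ t₁⁆)
        = (sw13 (S := S) (L := L))
        (∑ α : Fin N, (om3 o w α t₁ * rd12 c a b Dv α t₃ t₂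
            - om2 o w α t₂ * rd13 c a b Dv α t₃ t₁)) := by
      rw [hdCYBE t₃ t₂ t₁]
    simp only [r12, r13, r23, r32, r21, r31, om1, om2, om3, rd12, rd13, rd31, rd32,
      lie_def', sum_mul', mul_sum', el_mul, one_mul, mul_one, map_add, map_sub,
      map_sum, sw13_el] at H ⊢
    exact H
  -- decompose the skew-symmetrized left-hand side
  have key : ⁅p12 c a b t₁ t₂, p13 c a b t₁ t₃⁆ + ⁅p12 c a b t₁ t₂, p23 c a b t₂ t₃⁆
      + ⁅p32 c a b t₃ t₂, p13 c a b t₁ t₃⁆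
      = (⁅r12 c a b t₁ t₂, r13 c a b t₁ t₃⁆ + ⁅r12 c a b t₁ t₂, r23 c a b t₂ t₃⁆
          + ⁅r32 c a b t₃ t₂, r13 c a b t₁ t₃⁆)
        - (⁅r21 c a b t₂ t₁, r23 c a b t₂ t₃⁆ + ⁅r21 c a b t₂ t₁, r13 c a b t₁ t₃⁆
          + ⁅r31 c a b t₃ t₁, r23 c a b t₂ t₃⁆)
        - (⁅r32 c a b t₃ t₂, r31 c a b t₃ t₁⁆ + ⁅r32 c a b t₃ t₂, r21 c a b t₂ t₁⁆
          + ⁅r12 c a b t₁ t₂, r31 c a b t₃ t₁⁆)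
        + ⁅r21 c a b t₂ t₁, r31 c a b t₃ t₁⁆ - ⁅r12 c a b t₁ t₂, r32 c a b t₃ t₂⁆
        - ⁅r23 c a b t₂ t₃, r13 c a b t₁ t₃⁆ := by
    simp only [p12, p13, p23, p32, lie_def', mul_sub', sub_mul']
    abel
  rw [key, h1, h2, h3, z4, z6, z11, add_zero', sub_zero', sub_zero',
    ← sum_sub', ← sum_sub']
  refine Finset.sum_congr rfl fun α _ => ?_
  have e12 : pd12 c a b Dv α t₁ t₂
      = rd12 c a b Dv α t₁ t₂ - rd21 c a b Dv α t₂ t₁ := by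
    rw [pd12, sum_sub']; rfl
  have e13 : pd13 c a b Dv α t₁ t₃
      = rd13 c a b Dv α t₁ t₃ - rd31 c a b Dv α t₃ t₁ := by
    rw [pd13, sum_sub']; rfl
  have e23 : pd23 c a b Dv α t₂ t₃
      = rd23 c a b Dv α t₂ t₃ - rd32 c a b Dv α t₃ t₂ := by
    rw [pd23, sum_sub']; rfl
  rw [e12, e13, e23, mul_sub', mul_sub', mul_sub']
  abel


end
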